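/- Let X ⊂ R^d be finite with span(X) = R^d. Then min over probability distributions λ on X of max_{x∈X} x^T(Σ_{x'∈X} λ_{x'} x'x'^T)^{-1} x equals d (Kiefer–Wolfowitz). -/

import Mathlib

open Matrix

variable {K d : ℕ}

lemma aux_mulVec_sum {ι : Type*} (s : Finset ι) (M : ι → Matrix (Fin d) (Fin d) ℝ)
    (v : Fin d → ℝ) : (∑ i ∈ s, M i) *ᵥ v = ∑ i ∈ s, M i *ᵥ v := by
  ext j
  simp [mulVec, dotProduct, Matrix.sum_apply, Finset.sum_mul]
  rw [Finset.sum_comm]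

lemma aux_dotProduct_sum {ι : Type*} (s : Finset ι) (v : Fin d → ℝ) (w : ι → Fin d → ℝ) :
    v ⬝ᵥ (∑ i ∈ s, w i) = ∑ i ∈ s, v ⬝ᵥ w i := by
  simp [dotProduct, Finset.sum_apply, Finset.mul_sum]
  rw [Finset.sum_comm]

lemma aux_sum_dotProduct {ι : Type*} (s : Finset ι) (v : Fin d → ℝ) (w : ι → Fin d → ℝ) :
    (∑ i ∈ s, w i) ⬝ᵥ v = ∑ i ∈ s, w i ⬝ᵥ v := by
  simp [dotProduct, Finset.sum_apply, Finset.sum_mul]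
  rw [Finset.sum_comm]

lemma aux_quad (u v : Fin d → ℝ) : v ⬝ᵥ (vecMulVec u u *ᵥ v) = (u ⬝ᵥ v)^2 := by
  simp only [dotProduct, mulVec, vecMulVec_apply, Finset.mul_sum, pow_two, dotProduct,
    Finset.sum_mul]
  rw [Finset.sum_comm]
  exact Finset.sum_congr rfl fun i _ => Finset.sum_congr rfl fun k _ => by ring

lemma aux_trace (M : Matrix (Fin d) (Fin d) ℝ) (u : Fin d → ℝ) :
    trace (M * vecMulVec u u) = u ⬝ᵥ (M *ᵥ u) := by
  simp only [trace, diag, Matrix.mul_apply, vecMulVec_apply, dotProduct, mulVec, Finset.mul_sum]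
  exact Finset.sum_congr rfl fun i _ => Finset.sum_congr rfl fun k _ => by ring

lemma aux_det {P : Matrix (Fin d) (Fin d) ℝ} (hP : IsUnit P.det) (s : ℝ) (u : Fin d → ℝ) :
    (P + s • vecMulVec u u).det = P.det * (1 + s * (u ⬝ᵥ P⁻¹ *ᵥ u)) := by
  have h1 : s • vecMulVec u u = vecMulVec (s • u) u := by
    ext i j; simp [vecMulVec_apply]; ring
  rw [h1, vecMulVec_eq Unit, Matrix.det_add_replicateCol_mul_replicateRow hP,
    Matrix.det_unique (1 + replicateRow Unit u * P⁻¹ * replicateCol Unit (s • u))]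
  congr 1
  simp only [Matrix.add_apply, Matrix.one_apply_eq, Matrix.mul_apply, Matrix.replicateRow_apply,
    Matrix.replicateCol_apply, dotProduct, mulVec, Finset.mul_sum, Finset.sum_mul]
  congr 1
  rw [Finset.sum_comm]
  exact Finset.sum_congr rfl fun i _ => Finset.sum_congr rfl fun k _ => by
    simp [Pi.smul_apply]; ring

lemma aux_quadform (x : Fin K → Fin d → ℝ) (l : Fin K → ℝ) (v : Fin d → ℝ) :
    v ⬝ᵥ ((∑ i, l i • vecMulVec (x i) (x i)) *ᵥ v) = ∑ i, l i * (x i ⬝ᵥ v)^2 := by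
  rw [aux_mulVec_sum, aux_dotProduct_sum]
  refine Finset.sum_congr rfl fun i _ => ?_
  rw [smul_mulVec, dotProduct_smul, aux_quad]
  simp

lemma aux_sum_trace (x : Fin K → Fin d → ℝ) (l : Fin K → ℝ)
    (hdet : IsUnit (∑ i, l i • vecMulVec (x i) (x i)).det) :
    ∑ i, l i * (x i ⬝ᵥ (∑ i, l i • vecMulVec (x i) (x i))⁻¹ *ᵥ x i) = d := by
  set M := ∑ i, l i • vecMulVec (x i) (x i) with hM
  have h1 : M⁻¹ * M = 1 := Matrix.nonsing_inv_mul M hdet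
  have h2 : trace (M⁻¹ * M) = (d : ℝ) := by
    rw [h1, Matrix.trace_one, Fintype.card_fin]
  rw [← h2]
  nth_rewrite 2 [hM]
  rw [Matrix.mul_sum, Matrix.trace_sum]
  refine Finset.sum_congr rfl fun i _ => ?_
  rw [Matrix.mul_smul, Matrix.trace_smul, aux_trace]
  simp [hM]

lemma aux_posdef (x : Fin K → Fin d → ℝ) (hspan : Submodule.span ℝ (Set.range x) = ⊤)
    (l : Fin K → ℝ) (hl : ∀ i, 0 < l i) :
    (∑ i, l i • vecMulVec (x i) (x i)).PosDef := by
  refine Matrix.PosDef.of_dotProduct_mulVec_pos ?_ ?_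
  · ext i j
    simp only [Matrix.conjTranspose_apply, Matrix.sum_apply, Matrix.smul_apply,
      vecMulVec_apply, smul_eq_mul, star_trivial]
    exact Finset.sum_congr rfl fun k _ => by ring
  · intro v hv
    have hsv : star v = v := by simp
    rw [hsv, aux_quadform]
    have hex : ∃ i, x i ⬝ᵥ v ≠ 0 := by
      by_contra h
      push_neg at h
      apply hv
      have hvmem : v ∈ Submodule.span ℝ (Set.range x) := hspan ▸ Submodule.mem_top
      obtain ⟨c, hc⟩ := (Submodule.mem_span_range_iff_exists_fun ℝ).mp hvmem
      rw [← dotProduct_self_eq_zero (v := v)]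
      nth_rewrite 1 [← hc]
      rw [aux_sum_dotProduct]
      refine Finset.sum_eq_zero fun i _ => ?_
      rw [smul_dotProduct, h i, smul_zero]
    obtain ⟨i0, hi0⟩ := hex
    refine Finset.sum_pos' (fun i _ => ?_) ⟨i0, Finset.mem_univ i0, ?_⟩
    · exact mul_nonneg (hl i).le (sq_nonneg _)
    · exact mul_pos (hl i0) (by positivity)

set_option maxHeartbeats 1000000 in
/-- Kiefer–Wolfowitz: for a finite spanning set of arms, the minimum over designs `λ`
(with invertible design matrix) of the maximum predictive variance
`max_x xᵀ(Σ λ_{x'} x'x'ᵀ)⁻¹x` equals `d`. -/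
theorem stmt_13 {K d : ℕ} (x : Fin K → Fin d → ℝ)
    (hspan : Submodule.span ℝ (Set.range x) = ⊤) :
    (⨅ lam : {l : Fin K → ℝ // (∀ i, 0 ≤ l i) ∧ (∑ i, l i = 1) ∧
        IsUnit (∑ i, l i • Matrix.vecMulVec (x i) (x i)).det},
      ⨆ j : Fin K,
        x j ⬝ᵥ (∑ i, lam.1 i • Matrix.vecMulVec (x i) (x i))⁻¹.mulVec (x j)) = d := by
  classical
  rcases Nat.eq_zero_or_pos K with hK | hK
  · -- K = 0 : then d = 0 and the index type is empty
    subst hK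
    have hd : d = 0 := by
      by_contra hd
      have h1 : (1 : Fin d → ℝ) ∈ Submodule.span ℝ (Set.range x) := hspan ▸ Submodule.mem_top
      rw [Set.range_eq_empty, Submodule.span_empty, Submodule.mem_bot] at h1
      have := congrFun h1 ⟨0, Nat.pos_of_ne_zero hd⟩
      norm_num at this
    haveI : IsEmpty {l : Fin 0 → ℝ // (∀ i, 0 ≤ l i) ∧ (∑ i, l i = 1) ∧
        IsUnit (∑ i, l i • Matrix.vecMulVec (x i) (x i)).det} := by
      refine ⟨fun l => ?_⟩
      have := l.2.2.1
      simp at this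
    rw [iInf, Set.range_eq_empty, Real.sInf_empty]
    exact_mod_cast hd.symm
  haveI : Nonempty (Fin K) := ⟨⟨0, hK⟩⟩
  -- lower bound: every design has max variance ≥ d
  have hlow : ∀ lam : {l : Fin K → ℝ // (∀ i, 0 ≤ l i) ∧ (∑ i, l i = 1) ∧
        IsUnit (∑ i, l i • Matrix.vecMulVec (x i) (x i)).det},
      (d : ℝ) ≤ ⨆ j : Fin K,
        x j ⬝ᵥ (∑ i, lam.1 i • Matrix.vecMulVec (x i) (x i))⁻¹.mulVec (x j) := by
    rintro ⟨l, hl0, hl1, hldet⟩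
    set f : Fin K → ℝ := fun j =>
      x j ⬝ᵥ (∑ i, l i • Matrix.vecMulVec (x i) (x i))⁻¹.mulVec (x j) with hf
    have hb : BddAbove (Set.range f) := Set.Finite.bddAbove (Set.finite_range f)
    have hle : ∀ i, f i ≤ ⨆ j, f j := fun i => le_ciSup hb i
    calc (d : ℝ) = ∑ i, l i * f i := (aux_sum_trace x l hldet).symm
      _ ≤ ∑ i, l i * (⨆ j, f j) :=
          Finset.sum_le_sum fun i _ => mul_le_mul_of_nonneg_left (hle i) (hl0 i)
      _ = ⨆ j, f j := by rw [← Finset.sum_mul, hl1, one_mul]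
  -- upper bound: D-optimal design
  set u0 : Fin K → ℝ := fun _ => (K : ℝ)⁻¹ with hu0
  have hu0mem : u0 ∈ stdSimplex ℝ (Fin K) := by
    constructor
    · intro i; positivity
    · simp [hu0, Finset.sum_const, Finset.card_fin]
      field_simp
  have PD0 : (∑ i, u0 i • vecMulVec (x i) (x i)).PosDef :=
    aux_posdef x hspan u0 (fun i => by positivity)
  have hcont : Continuous fun l : Fin K → ℝ => (∑ i, l i • vecMulVec (x i) (x i)).det :=
    Continuous.matrix_det (continuous_finset_sum _ fun i _ =>
      ((continuous_apply i).smul continuous_const))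
  obtain ⟨ls, hls, hmax⟩ := (isCompact_stdSimplex ℝ (Fin K)).exists_isMaxOn ⟨u0, hu0mem⟩
    hcont.continuousOn
  set P : Matrix (Fin d) (Fin d) ℝ := ∑ i, ls i • vecMulVec (x i) (x i) with hP
  have hDpos : 0 < P.det := lt_of_lt_of_le PD0.det_pos (hmax hu0mem)
  have hunit : IsUnit P.det := hDpos.ne'.isUnit
  have hls0 : ∀ i, 0 ≤ ls i := hls.1
  have hls1 : ∑ i, ls i = 1 := hls.2
  -- key: at the maximizer, all variances ≤ d
  have hq : ∀ j, x j ⬝ᵥ P⁻¹ *ᵥ x j ≤ (d : ℝ) := by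
    intro j
    by_contra hlt
    push_neg at hlt
    set q : ℝ := x j ⬝ᵥ P⁻¹ *ᵥ x j with hqdef
    have hd1 : 1 ≤ d := by
      rcases Nat.eq_zero_or_pos d with h0 | h
      · exfalso
        have : q = 0 := by
          subst h0
          simp [hqdef, dotProduct]
        rw [this] at hlt
        exact absurd hlt (by simp)
      · exact h
    have hq1 : (1 : ℝ) < q := lt_of_le_of_lt (by exact_mod_cast hd1) hlt
    set c : ℝ := ((d : ℝ) - 1) * (q - 1) with hc
    have hc0 : 0 ≤ c := mul_nonneg (by simp; exact_mod_cast hd1) (by linarith)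
    set t : ℝ := min (1/2) ((q - d) / (2 * (c + 1))) with ht
    have hqd : (0:ℝ) < q - d := by linarith
    have ht0 : 0 < t := lt_min (by norm_num) (div_pos hqd (by linarith))
    have ht1 : t < 1 := lt_of_le_of_lt (min_le_left _ _) (by norm_num)
    have h1t : (0 : ℝ) < 1 - t := by linarith
    have htle : t * (2 * (c + 1)) ≤ q - d := by
      have := min_le_right (1/2) ((q - d) / (2 * (c + 1)))
      rw [← ht] at this
      exact (le_div_iff₀ (by linarith)).mp this
    -- the perturbed design
    set lt' : Fin K → ℝ := fun i => (1 - t) * ls i + t * (if i = j then 1 else 0) with hlt'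
    have hmem : lt' ∈ stdSimplex ℝ (Fin K) := by
      constructor
      · intro i
        have : (0:ℝ) ≤ (if i = j then (1:ℝ) else 0) := by split <;> norm_num
        exact add_nonneg (mul_nonneg h1t.le (hls0 i)) (mul_nonneg ht0.le this)
      · rw [Finset.sum_add_distrib, ← Finset.mul_sum, hls1, ← Finset.mul_sum]
        simp
    have hAmix : (∑ i, lt' i • vecMulVec (x i) (x i)) =
        (1 - t) • (P + (t / (1 - t)) • vecMulVec (x j) (x j)) := by
      rw [smul_add, smul_smul, mul_div_cancel₀ _ h1t.ne']
      have h1 : (∑ i, lt' i • vecMulVec (x i) (x i))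
          = (∑ i, ((1 - t) * ls i) • vecMulVec (x i) (x i)) +
            ∑ i, ((t * if i = j then 1 else 0) • vecMulVec (x i) (x i)) := by
        rw [← Finset.sum_add_distrib]
        exact Finset.sum_congr rfl fun i _ => by rw [← add_smul]
      rw [h1]
      congr 1
      · rw [hP, Finset.smul_sum]
        exact Finset.sum_congr rfl fun i _ => (mul_smul _ _ _)
      · rw [Finset.sum_eq_single j (fun i _ hij => by simp [hij])
          (fun h => absurd (Finset.mem_univ j) h)]
        simp
    have hdet1 : (∑ i, lt' i • vecMulVec (x i) (x i)).det =
        (1 - t)^d * (P.det * (1 + (t / (1 - t)) * q)) := by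
      rw [hAmix, Matrix.det_smul, Fintype.card_fin, aux_det hunit]
    have hle2 : (∑ i, lt' i • vecMulVec (x i) (x i)).det ≤ P.det := hmax hmem
    rw [hdet1] at hle2
    have hEpos : (0:ℝ) ≤ 1 + (t / (1 - t)) * q :=
      add_nonneg zero_le_one (mul_nonneg (div_nonneg ht0.le h1t.le) (by linarith))
    have key : (1 - t)^d * (1 + (t / (1 - t)) * q) ≤ 1 := by
      have h2 : P.det * ((1 - t)^d * (1 + (t / (1 - t)) * q)) ≤ P.det * 1 := by
        rw [mul_one]
        calc P.det * ((1 - t)^d * (1 + (t / (1 - t)) * q))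
            = (1 - t)^d * (P.det * (1 + (t / (1 - t)) * q)) := by ring
          _ ≤ P.det := hle2
      exact le_of_mul_le_mul_left h2 hDpos
    have hdsplit : (1 - t)^d = (1 - t)^(d - 1) * (1 - t) := by
      rw [← pow_succ]
      congr 1
      omega
    have key2 : (1 - t)^(d - 1) * ((1 - t) + t * q) ≤ 1 := by
      have hrw : (1 - t) * (1 + (t / (1 - t)) * q) = (1 - t) + t * q := by
        field_simp
      calc (1 - t)^(d - 1) * ((1 - t) + t * q)
          = (1 - t)^d * (1 + (t / (1 - t)) * q) := by
            rw [hdsplit, ← hrw]; ring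
        _ ≤ 1 := key
    have hB : 1 - ((d : ℝ) - 1) * t ≤ (1 - t)^(d - 1) := by
      have hber := one_add_mul_le_pow (a := -t) (by linarith) (d - 1)
      have hcast : ((d - 1 : ℕ) : ℝ) = (d : ℝ) - 1 := by
        rw [Nat.cast_sub hd1, Nat.cast_one]
      rw [hcast] at hber
      calc 1 - ((d : ℝ) - 1) * t = 1 + ((d : ℝ) - 1) * (-t) := by ring
        _ ≤ (1 + -t)^(d - 1) := hber
        _ = (1 - t)^(d - 1) := by ring_nf
    have hEpos2 : (0:ℝ) ≤ (1 - t) + t * q := by nlinarith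
    have h3 : (1 - ((d : ℝ) - 1) * t) * ((1 - t) + t * q) ≤ 1 :=
      le_trans (mul_le_mul_of_nonneg_right hB hEpos2) key2
    -- expand := 1 + t*(q-d) - c*t^2 ≤ 1
    have h4 : t * (q - d) ≤ c * t^2 := by nlinarith [h3]
    nlinarith [h4, htle, ht0, hc0, mul_pos ht0 ht0]
  have hup : (⨆ j : Fin K, x j ⬝ᵥ P⁻¹ *ᵥ x j) ≤ (d : ℝ) := ciSup_le hq
  haveI : Nonempty {l : Fin K → ℝ // (∀ i, 0 ≤ l i) ∧ (∑ i, l i = 1) ∧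
      IsUnit (∑ i, l i • Matrix.vecMulVec (x i) (x i)).det} := ⟨⟨ls, hls0, hls1, hunit⟩⟩
  refine le_antisymm ?_ (le_ciInf hlow)
  have hbdd : BddBelow (Set.range fun lam : {l : Fin K → ℝ // (∀ i, 0 ≤ l i) ∧ (∑ i, l i = 1) ∧
        IsUnit (∑ i, l i • Matrix.vecMulVec (x i) (x i)).det} =>
      ⨆ j : Fin K, x j ⬝ᵥ (∑ i, lam.1 i • Matrix.vecMulVec (x i) (x i))⁻¹.mulVec (x j)) := by
    refine ⟨d, ?_⟩
    rintro _ ⟨lam, rfl⟩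
    exact hlow lam
  exact (ciInf_le hbdd ⟨ls, hls0, hls1, hunit⟩).trans hup
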